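/- In the exterior algebra on n generators over Q, the elements F_r = Σ_{|A|=r} θ_A (for r ≥ 0) pairwise commute: F_r F_s = F_s F_r for all r, s. -/

import Mathlib

open ExteriorAlgebra

/-- The generator `θ_i` of the exterior algebra `Λ(ℚ^n)`. -/
noncomputable def theta (n : ℕ) (i : Fin n) : ExteriorAlgebra ℚ (Fin n → ℚ) :=
  ExteriorAlgebra.ι ℚ (Pi.single i (1 : ℚ))

/-- For `A = {a_1 < a_2 < ⋯ < a_k} ⊆ [n]`, the monomial `θ_A = θ_{a_1} θ_{a_2} ⋯ θ_{a_k}`. -/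
noncomputable def thetaA (n : ℕ) (A : Finset (Fin n)) : ExteriorAlgebra ℚ (Fin n → ℚ) :=
  ((A.sort (· ≤ ·)).map (theta n)).prod

/-- The fundamental quasisymmetric invariant `F_{1^r} = Σ_{A ⊆ [n], |A| = r} θ_A`. -/
noncomputable def Fq (n r : ℕ) : ExteriorAlgebra ℚ (Fin n → ℚ) :=
  ∑ A ∈ Finset.powersetCard r (Finset.univ : Finset (Fin n)), thetaA n A
set_option maxHeartbeats 1000000

lemma theta_anticomm (n : ℕ) (i j : Fin n) :
    theta n i * theta n j = -(theta n j * theta n i) := by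
  have h := ExteriorAlgebra.ι_add_mul_swap (R := ℚ) (M := Fin n → ℚ) (Pi.single i (1:ℚ)) (Pi.single j (1:ℚ))
  unfold theta
  exact eq_neg_of_add_eq_zero_left h

lemma theta_sq (n : ℕ) (i : Fin n) : theta n i * theta n i = 0 :=
  ExteriorAlgebra.ι_sq_zero _

lemma theta_mul_list (n : ℕ) (i : Fin n) (l : List (Fin n)) :
    theta n i * (l.map (theta n)).prod
      = ((-1 : ℚ) ^ l.length) • ((l.map (theta n)).prod * theta n i) := by
  induction l with
  | nil => simp
  | cons a l ih =>
    simp only [List.map_cons, List.prod_cons, List.length_cons]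
    rw [← mul_assoc, theta_anticomm, neg_mul, mul_assoc, ih]
    rw [mul_smul_comm, ← neg_smul, ← mul_assoc]
    congr 1
    ring

lemma theta_mul_thetaA (n : ℕ) (i : Fin n) (A : Finset (Fin n)) :
    theta n i * thetaA n A = ((-1 : ℚ) ^ A.card) • (thetaA n A * theta n i) := by
  unfold thetaA
  rw [theta_mul_list, Finset.length_sort]

lemma sort_insert_max {α : Type*} [LinearOrder α] [DecidableEq α] {a : α} {s : Finset α}
    (h₁ : ∀ b ∈ s, b < a) (h₂ : a ∉ s) :
    (insert a s).sort (· ≤ ·) = s.sort (· ≤ ·) ++ [a] := by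
  refine (fun hp h1 h2 => List.Perm.eq_of_pairwise' (r := (· ≤ ·)) h1 h2 hp) ?_ ?_ ?_
  · rw [← Multiset.coe_eq_coe, Finset.sort_eq]
    have h3 : ((s.sort (· ≤ ·) ++ [a] : List α) : Multiset α) = s.val + ({a} : Multiset α) := by
      rw [← Multiset.coe_add]
      congr 1
      rw [Finset.sort_eq]
    rw [h3, Finset.insert_val, Multiset.ndinsert_of_notMem h₂, add_comm,
      ← Multiset.singleton_add]
  · exact Finset.pairwise_sort _ _
  · apply List.pairwise_append.2
    refine ⟨Finset.pairwise_sort _ _, List.pairwise_singleton _ a, ?_⟩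
    intro x hx y hy
    simp only [List.mem_singleton] at hy
    subst hy
    exact le_of_lt (h₁ x ((Finset.mem_sort _).1 hx))

lemma thetaA_insert_max (n : ℕ) (j : Fin n) (A : Finset (Fin n))
    (h₁ : ∀ b ∈ A, b < j) (h₂ : j ∉ A) :
    thetaA n (insert j A) = thetaA n A * theta n j := by
  unfold thetaA
  rw [sort_insert_max h₁ h₂, List.map_append, List.prod_append]
  simp

lemma thetaA_empty (n : ℕ) : thetaA n ∅ = 1 := by simp [thetaA]

noncomputable def G (n k r : ℕ) : ExteriorAlgebra ℚ (Fin n → ℚ) :=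
  ∑ A ∈ Finset.powersetCard r ((Finset.univ : Finset (Fin n)).filter (fun i : Fin n => (i : ℕ) < k)),
    thetaA n A

lemma G_zero (n k : ℕ) : G n k 0 = 1 := by
  simp [G, Finset.powersetCard_zero, thetaA_empty]

lemma theta_mul_G (n : ℕ) (j : Fin n) (k r : ℕ) :
    theta n j * G n k r = ((-1 : ℚ) ^ r) • (G n k r * theta n j) := by
  unfold G
  rw [Finset.mul_sum, Finset.sum_mul, Finset.smul_sum]
  apply Finset.sum_congr rfl
  intro A hA
  have hcard : A.card = r := (Finset.mem_powersetCard.1 hA).2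
  rw [theta_mul_thetaA, hcard]

/-- The `q = -1` binomial coefficient `[r+s choose r]_{-1}`. -/
def cc (r s : ℕ) : ℚ :=
  if Odd r ∧ Odd s then 0 else (((r + s) / 2).choose (r / 2) : ℚ)

lemma cc_zero_left (s : ℕ) : cc 0 s = 1 := by
  simp [cc]

lemma cc_zero_right (r : ℕ) : cc r 0 = 1 := by
  have : (r + 0) / 2 = r / 2 := by omega
  simp [cc, this]

lemma choose_ab (a b : ℕ) : (a + b).choose a = (a + b).choose b := by
  rw [← Nat.choose_symm (Nat.le_add_left b a)]
  congr 1
  omega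

lemma cc_symm (r s : ℕ) : cc r s = cc s r := by
  unfold cc
  rcases Nat.even_or_odd' r with ⟨a, rfl | rfl⟩ <;>
    rcases Nat.even_or_odd' s with ⟨b, rfl | rfl⟩
  · have h1 : (2 * a + 2 * b) / 2 = a + b := by omega
    have h2 : (2 * b + 2 * a) / 2 = a + b := by omega
    have h3 : (2 * a) / 2 = a := by omega
    have h4 : (2 * b) / 2 = b := by omega
    have hn1 : ¬ (Odd (2 * a) ∧ Odd (2 * b)) := by rintro ⟨⟨c, hc⟩, -⟩; omega
    have hn2 : ¬ (Odd (2 * b) ∧ Odd (2 * a)) := by rintro ⟨⟨c, hc⟩, -⟩; omega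
    rw [if_neg hn1, if_neg hn2, h1, h2, h3, h4]
    exact_mod_cast choose_ab a b
  · have h1 : (2 * a + (2 * b + 1)) / 2 = a + b := by omega
    have h2 : (2 * b + 1 + 2 * a) / 2 = a + b := by omega
    have h3 : (2 * a) / 2 = a := by omega
    have h4 : (2 * b + 1) / 2 = b := by omega
    have hn1 : ¬ (Odd (2 * a) ∧ Odd (2 * b + 1)) := by rintro ⟨⟨c, hc⟩, -⟩; omega
    have hn2 : ¬ (Odd (2 * b + 1) ∧ Odd (2 * a)) := by rintro ⟨-, ⟨c, hc⟩⟩; omega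
    rw [if_neg hn1, if_neg hn2, h1, h2, h3, h4]
    exact_mod_cast choose_ab a b
  · have h1 : (2 * a + 1 + 2 * b) / 2 = a + b := by omega
    have h2 : (2 * b + (2 * a + 1)) / 2 = a + b := by omega
    have h3 : (2 * a + 1) / 2 = a := by omega
    have h4 : (2 * b) / 2 = b := by omega
    have hn1 : ¬ (Odd (2 * a + 1) ∧ Odd (2 * b)) := by rintro ⟨-, ⟨c, hc⟩⟩; omega
    have hn2 : ¬ (Odd (2 * b) ∧ Odd (2 * a + 1)) := by rintro ⟨⟨c, hc⟩, -⟩; omega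
    rw [if_neg hn1, if_neg hn2, h1, h2, h3, h4]
    exact_mod_cast choose_ab a b
  · rw [if_pos ⟨⟨a, by omega⟩, ⟨b, by omega⟩⟩, if_pos ⟨⟨b, by omega⟩, ⟨a, by omega⟩⟩]

lemma cc_pascal (r s : ℕ) (hr : 1 ≤ r) (hs : 1 ≤ s) :
    cc r s = cc r (s - 1) + (-1 : ℚ) ^ s * cc (r - 1) s := by
  rcases Nat.even_or_odd' r with ⟨a, rfl | rfl⟩ <;>
    rcases Nat.even_or_odd' s with ⟨b, rfl | rfl⟩
  · -- r = 2a even (a ≥ 1), s = 2b even (b ≥ 1)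
    obtain ⟨a', rfl⟩ : ∃ a', a = a' + 1 := ⟨a - 1, by omega⟩
    obtain ⟨b', rfl⟩ : ∃ b', b = b' + 1 := ⟨b - 1, by omega⟩
    unfold cc
    have e1 : (2 * (a' + 1) + 2 * (b' + 1)) / 2 = a' + b' + 2 := by omega
    have e2 : 2 * (a' + 1) / 2 = a' + 1 := by omega
    have e3 : 2 * (b' + 1) - 1 = 2 * b' + 1 := by omega
    have e4 : (2 * (a' + 1) + (2 * b' + 1)) / 2 = a' + b' + 1 := by omega
    have e5 : 2 * (a' + 1) - 1 = 2 * a' + 1 := by omega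
    have e6 : (2 * a' + 1 + 2 * (b' + 1)) / 2 = a' + b' + 1 := by omega
    have e7 : (2 * a' + 1) / 2 = a' := by omega
    have hn1 : ¬ (Odd (2 * (a' + 1)) ∧ Odd (2 * (b' + 1))) := by rintro ⟨⟨c, hc⟩, -⟩; omega
    have hn2 : ¬ (Odd (2 * (a' + 1)) ∧ Odd (2 * b' + 1)) := by rintro ⟨⟨c, hc⟩, -⟩; omega
    have hn3 : ¬ (Odd (2 * a' + 1) ∧ Odd (2 * (b' + 1))) := by rintro ⟨-, ⟨c, hc⟩⟩; omega
    rw [e3, e5, if_neg hn1, if_neg hn2, if_neg hn3, e1, e2, e4, e6, e7]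
    have hpow : (-1 : ℚ) ^ (2 * (b' + 1)) = 1 := by rw [pow_mul]; norm_num
    rw [hpow, one_mul]
    have key : (a' + b' + 2).choose (a' + 1)
        = (a' + b' + 1).choose a' + (a' + b' + 1).choose (a' + 1) := by
      have h := Nat.choose_succ_succ (a' + b' + 1) a'
      simpa using h
    norm_cast
    rw [key]
    omega
  · -- r = 2a even (a ≥ 1), s = 2b+1 odd
    unfold cc
    have e1 : (2 * a + (2 * b + 1)) / 2 = a + b := by omega
    have e2 : 2 * a / 2 = a := by omega
    have e3 : 2 * b + 1 - 1 = 2 * b := by omega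
    have e4 : (2 * a + 2 * b) / 2 = a + b := by omega
    have hn1 : ¬ (Odd (2 * a) ∧ Odd (2 * b + 1)) := by rintro ⟨⟨c, hc⟩, -⟩; omega
    have hn2 : ¬ (Odd (2 * a) ∧ Odd (2 * b)) := by rintro ⟨⟨c, hc⟩, -⟩; omega
    have hy : Odd (2 * a - 1) ∧ Odd (2 * b + 1) := ⟨⟨a - 1, by omega⟩, ⟨b, by omega⟩⟩
    rw [e3, if_neg hn1, if_neg hn2, if_pos hy, e1, e2, e4]
    ring
  · -- r = 2a+1 odd, s = 2b even (b ≥ 1)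
    obtain ⟨b', rfl⟩ : ∃ b', b = b' + 1 := ⟨b - 1, by omega⟩
    unfold cc
    have e1 : (2 * a + 1 + 2 * (b' + 1)) / 2 = a + b' + 1 := by omega
    have e2 : (2 * a + 1) / 2 = a := by omega
    have e3 : 2 * (b' + 1) - 1 = 2 * b' + 1 := by omega
    have e4 : 2 * a + 1 - 1 = 2 * a := by omega
    have e5 : (2 * a + 2 * (b' + 1)) / 2 = a + b' + 1 := by omega
    have e6 : 2 * a / 2 = a := by omega
    have hn1 : ¬ (Odd (2 * a + 1) ∧ Odd (2 * (b' + 1))) := by rintro ⟨-, ⟨c, hc⟩⟩; omega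
    have hy : Odd (2 * a + 1) ∧ Odd (2 * b' + 1) := ⟨⟨a, by omega⟩, ⟨b', by omega⟩⟩
    have hn3 : ¬ (Odd (2 * a) ∧ Odd (2 * (b' + 1))) := by rintro ⟨⟨c, hc⟩, -⟩; omega
    rw [e3, e4, if_neg hn1, if_pos hy, if_neg hn3, e1, e5, e2, e6]
    have hpow : (-1 : ℚ) ^ (2 * (b' + 1)) = 1 := by rw [pow_mul]; norm_num
    rw [hpow]
    ring
  · -- r = 2a+1 odd, s = 2b+1 odd
    unfold cc
    have e1 : 2 * b + 1 - 1 = 2 * b := by omega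
    have e2 : 2 * a + 1 - 1 = 2 * a := by omega
    have e3 : (2 * a + 1 + 2 * b) / 2 = a + b := by omega
    have e4 : (2 * a + 1) / 2 = a := by omega
    have e5 : (2 * a + (2 * b + 1)) / 2 = a + b := by omega
    have e6 : 2 * a / 2 = a := by omega
    have hy : Odd (2 * a + 1) ∧ Odd (2 * b + 1) := ⟨⟨a, by omega⟩, ⟨b, by omega⟩⟩
    have hn2 : ¬ (Odd (2 * a + 1) ∧ Odd (2 * b)) := by rintro ⟨-, ⟨c, hc⟩⟩; omega
    have hn3 : ¬ (Odd (2 * a) ∧ Odd (2 * b + 1)) := by rintro ⟨⟨c, hc⟩, -⟩; omega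
    rw [e1, e2, if_pos hy, if_neg hn2, if_neg hn3, e3, e4, e5, e6]
    have hpow : (-1 : ℚ) ^ (2 * b + 1) = -1 := by
      rw [pow_succ, pow_mul]; norm_num
    rw [hpow]
    ring

lemma filter_lt_succ (n k : ℕ) (hk : k < n) :
    (Finset.univ : Finset (Fin n)).filter (fun i : Fin n => (i : ℕ) < k + 1)
      = insert ⟨k, hk⟩ ((Finset.univ : Finset (Fin n)).filter (fun i : Fin n => (i : ℕ) < k)) := by
  ext i
  simp only [Finset.mem_filter, Finset.mem_univ, true_and, Finset.mem_insert, Fin.ext_iff]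
  omega

lemma G_stable (n k r : ℕ) (hk : n ≤ k) : G n (k + 1) r = G n k r := by
  unfold G
  congr 2
  ext i
  simp only [Finset.mem_filter, Finset.mem_univ, true_and]
  have := i.isLt
  omega

lemma G_succ (n k : ℕ) (hk : k < n) (m : ℕ) :
    G n (k + 1) (m + 1) = G n k (m + 1) + G n k m * theta n ⟨k, hk⟩ := by
  have hmem : (⟨k, hk⟩ : Fin n) ∉
      (Finset.univ : Finset (Fin n)).filter (fun i : Fin n => (i : ℕ) < k) := by
    simp
  unfold G
  rw [filter_lt_succ n k hk, Finset.powersetCard_succ_insert hmem]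
  rw [Finset.sum_union]
  · congr 1
    rw [Finset.sum_image, Finset.sum_mul]
    · apply Finset.sum_congr rfl
      intro A hA
      obtain ⟨hsub, hcard⟩ := Finset.mem_powersetCard.1 hA
      apply thetaA_insert_max
      · intro b hb
        have := Finset.mem_filter.1 (hsub hb)
        exact this.2
      · intro hkA
        exact hmem (hsub hkA)
    · intro A hA B hB hAB
      have hA' : (⟨k, hk⟩ : Fin n) ∉ A := fun h =>
        hmem ((Finset.mem_powersetCard.1 hA).1 h)
      have hB' : (⟨k, hk⟩ : Fin n) ∉ B := fun h =>
        hmem ((Finset.mem_powersetCard.1 hB).1 h)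
      rw [← Finset.erase_insert hA', ← Finset.erase_insert hB', hAB]
  · rw [Finset.disjoint_left]
    intro A hA hA'
    obtain ⟨B, hB, rfl⟩ := Finset.mem_image.1 hA'
    have : (⟨k, hk⟩ : Fin n) ∈ insert (⟨k, hk⟩ : Fin n) B := Finset.mem_insert_self _ _
    exact hmem ((Finset.mem_powersetCard.1 hA).1 this)

lemma G_mul (n : ℕ) : ∀ k r s : ℕ, G n k r * G n k s = cc r s • G n k (r + s) := by
  intro k
  induction k with
  | zero =>
    intro r s
    have hfe : (Finset.univ : Finset (Fin n)).filter (fun i : Fin n => (i : ℕ) < 0) = ∅ := by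
      ext i; simp
    match r, s with
    | 0, 0 => simp [G_zero, cc_zero_left]
    | 0, s + 1 =>
      rw [G_zero, one_mul, cc_zero_left, Nat.zero_add, one_smul]
    | r + 1, s =>
      have h1 : G n 0 (r + 1) = 0 := by
        unfold G
        rw [hfe]
        rw [Finset.powersetCard_eq_empty.2 (by simp)]
        simp
      have h2 : G n 0 (r + 1 + s) = 0 := by
        unfold G
        rw [hfe]
        rw [Finset.powersetCard_eq_empty.2 (by simp)]
        simp
      rw [h1, h2, zero_mul, smul_zero]
  | succ k ih =>
    intro r s
    by_cases hk : k < n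
    · match r, s with
      | 0, s => rw [G_zero, one_mul, cc_zero_left, Nat.zero_add, one_smul]
      | r + 1, 0 => rw [G_zero, mul_one, cc_zero_right, Nat.add_zero, one_smul]
      | a + 1, b + 1 =>
        set t := theta n ⟨k, hk⟩ with ht
        have ht2 : t * t = 0 := theta_sq n _
        rw [G_succ n k hk a, G_succ n k hk b]
        have hidx : a + 1 + (b + 1) = (a + b + 1) + 1 := by omega
        rw [hidx, G_succ n k hk (a + b + 1)]
        set X := G n k (a + 1)
        set Y := G n k a
        set Z := G n k (b + 1)
        set W := G n k b
        have hZ : t * Z = ((-1 : ℚ) ^ (b + 1)) • (Z * t) := theta_mul_G n _ k (b + 1)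
        have hW : t * (W * t) = 0 := by
          rw [← mul_assoc, theta_mul_G, smul_mul_assoc, mul_assoc, ht2, mul_zero, smul_zero]
        have hXZ : X * Z = cc (a + 1) (b + 1) • G n k (a + b + 1 + 1) := by
          rw [ih (a + 1) (b + 1), hidx]
        have hXW : X * W = cc (a + 1) b • G n k (a + b + 1) := by
          rw [ih (a + 1) b, show a + 1 + b = a + b + 1 from by omega]
        have hYZ : Y * Z = cc a (b + 1) • G n k (a + b + 1) := by
          rw [ih a (b + 1), show a + (b + 1) = a + b + 1 from by omega]
        have hpas : cc (a + 1) (b + 1)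
            = cc (a + 1) b + (-1 : ℚ) ^ (b + 1) * cc a (b + 1) := by
          have := cc_pascal (a + 1) (b + 1) (by omega) (by omega)
          simpa using this
        calc (X + Y * t) * (Z + W * t)
            = X * Z + Y * t * Z + (X * (W * t) + Y * t * (W * t)) := by
              rw [mul_add, add_mul, add_mul]
          _ = X * Z + ((-1 : ℚ) ^ (b + 1)) • (Y * Z * t) + X * W * t := by
              rw [mul_assoc Y t Z, hZ, mul_smul_comm, ← mul_assoc,
                mul_assoc Y t (W * t), hW, mul_zero, add_zero, ← mul_assoc]
          _ = cc (a + 1) (b + 1) • G n k (a + b + 1 + 1)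
              + ((-1 : ℚ) ^ (b + 1) * cc a (b + 1)) • (G n k (a + b + 1) * t)
              + cc (a + 1) b • (G n k (a + b + 1) * t) := by
              rw [hXZ, hXW, hYZ, smul_mul_assoc, smul_mul_assoc, smul_smul]
          _ = cc (a + 1) (b + 1) • (G n k (a + b + 1 + 1) + G n k (a + b + 1) * t) := by
              rw [smul_add, hpas, add_smul, add_smul]
              abel
    · push_neg at hk
      rw [G_stable n k r hk, G_stable n k s hk, G_stable n k (r + s) hk]
      exact ih r s

lemma Fq_eq_G (n r : ℕ) : Fq n r = G n n r := by
  unfold Fq G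
  congr 2
  ext i
  simp [i.isLt]

lemma Fq_mul (n r s : ℕ) : Fq n r * Fq n s = cc r s • Fq n (r + s) := by
  rw [Fq_eq_G, Fq_eq_G, Fq_eq_G, G_mul]

/-- The elements `F_r` pairwise commute in the exterior algebra. -/
theorem stmt4 (n r s : ℕ) : Fq n r * Fq n s = Fq n s * Fq n r := by
  rw [Fq_mul, Fq_mul, cc_symm, Nat.add_comm]
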